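/- For every odd n > 0, each entry of the unique solution z of S_n z = 1 is strictly positive; consequently F_n · z_i is a positive integer for each i, where z = (F_{n-1}/F_n, …, F_1/F_n, 1/F_n). -/

import Mathlib

/-- The matrices `S_n` of Theorem 3 (Gill–Grünwald), defined inductively:
`S_1 = (1)`; for odd `m`, `S_{m+1}` has `1` in the top-left corner, zero row vector to
its right, zero column vector below it, and `S_m` in the bottom-right block; for even `m`,
`S_{m+1}` has `0` in the top-left corner, all-ones row and column borders, and `S_m` in the
bottom-right block. -/
def Smat : (n : ℕ) → Matrix (Fin n) (Fin n) ℝ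
  | 0 => 0
  | 1 => Matrix.of fun _ _ => 1
  | (m + 2) =>
    Matrix.of
      (Fin.cases
        (Fin.cases (if Odd (m + 1) then (1 : ℝ) else 0)
          (fun _ => if Odd (m + 1) then (0 : ℝ) else 1))
        (fun i => Fin.cases (if Odd (m + 1) then (0 : ℝ) else 1)
          (fun j => Smat (m + 1) i j)))

/-- The vector `z = (F_{n-1}/F_n, F_{n-2}/F_n, …, F_1/F_n, 1/F_n)`,
where `F` is the Fibonacci sequence (`Nat.fib`, with `F_1 = F_2 = 1`). -/
noncomputable def zsol (n : ℕ) : Fin n → ℝ := fun i =>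
  if (i : ℕ) = n - 1 then 1 / (Nat.fib n : ℝ)
  else (Nat.fib (n - 1 - (i : ℕ)) : ℝ) / (Nat.fib n : ℝ)

lemma fib_cast_pos {n : ℕ} (h : 0 < n) : (0:ℝ) < (Nat.fib n : ℝ) := by
  exact_mod_cast Nat.fib_pos.2 h

lemma zsol_sum (n : ℕ) (hn : 0 < n) :
    ∑ i, zsol n i = (Nat.fib (n+1) : ℝ) / (Nat.fib n : ℝ) := by
  have key : ∀ i : Fin n, zsol n i =
      ((Nat.fib (n - 1 - (i:ℕ)) : ℝ) + (if (i:ℕ) = n - 1 then 1 else 0)) / (Nat.fib n : ℝ) := by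
    intro i
    by_cases h : (i:ℕ) = n - 1
    · simp [zsol, h, Nat.sub_self]
    · simp [zsol, h]
  rw [Finset.sum_congr rfl (fun i _ => key i), ← Finset.sum_div]
  congr 1
  rw [Fin.sum_univ_eq_sum_range
    (fun k => ((Nat.fib (n - 1 - k) : ℝ) + (if k = n - 1 then 1 else 0)))]
  rw [Finset.sum_add_distrib]
  rw [Finset.sum_range_reflect (fun k => (Nat.fib k : ℝ)) n]
  rw [Finset.sum_ite_eq' (Finset.range n) (n-1) (fun _ => (1:ℝ))]
  rw [if_pos (Finset.mem_range.2 (by omega))]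
  have := Nat.fib_succ_eq_succ_sum n
  have : (Nat.fib (n+1) : ℝ) = (∑ k ∈ Finset.range n, Nat.fib k : ℕ) + 1 := by
    exact_mod_cast congrArg (Nat.cast : ℕ → ℝ) this
  rw [this]
  push_cast
  ring

lemma smat_mulVec_zero (m : ℕ) (hm : ¬ Odd (m+1)) (z : Fin (m+2) → ℝ) :
    (Smat (m+2)).mulVec z 0 = ∑ j : Fin (m+1), z j.succ := by
  simp [Matrix.mulVec, dotProduct, Fin.sum_univ_succ, Smat, hm]

lemma smat_mulVec_succ (m : ℕ) (hm : ¬ Odd (m+1)) (z : Fin (m+2) → ℝ) (i : Fin (m+1)) :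
    (Smat (m+2)).mulVec z i.succ = z 0 + (Smat (m+1)).mulVec (fun j => z j.succ) i := by
  simp [Matrix.mulVec, dotProduct, Fin.sum_univ_succ, Smat, hm]

lemma smat_mulVec_zero' (m : ℕ) (hm : Odd (m+1)) (z : Fin (m+2) → ℝ) :
    (Smat (m+2)).mulVec z 0 = z 0 := by
  simp [Matrix.mulVec, dotProduct, Fin.sum_univ_succ, Smat, hm]

lemma smat_mulVec_succ' (m : ℕ) (hm : Odd (m+1)) (z : Fin (m+2) → ℝ) (i : Fin (m+1)) :
    (Smat (m+2)).mulVec z i.succ = (Smat (m+1)).mulVec (fun j => z j.succ) i := by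
  simp [Matrix.mulVec, dotProduct, Fin.sum_univ_succ, Smat, hm]

lemma not_odd_succ_of_odd {m : ℕ} (hm : Odd (m+1)) : ¬ Odd (m+1+1) := by
  obtain ⟨k, hk⟩ := hm
  rintro ⟨l, hl⟩
  omega

lemma smat_mulVec_zero3 (m : ℕ) (hm : Odd (m+1)) (z : Fin (m+3) → ℝ) :
    (Smat (m+3)).mulVec z 0 = ∑ j : Fin (m+2), z j.succ :=
  smat_mulVec_zero (m+1) (not_odd_succ_of_odd hm) z

lemma smat_mulVec_one3 (m : ℕ) (hm : Odd (m+1)) (z : Fin (m+3) → ℝ) :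
    (Smat (m+3)).mulVec z (0 : Fin (m+2)).succ = z 0 + z (0 : Fin (m+2)).succ := by
  rw [smat_mulVec_succ (m+1) (not_odd_succ_of_odd hm) z 0,
    smat_mulVec_zero' m hm]

lemma smat_mulVec_two3 (m : ℕ) (hm : Odd (m+1)) (z : Fin (m+3) → ℝ) (i : Fin (m+1)) :
    (Smat (m+3)).mulVec z i.succ.succ
      = z 0 + (Smat (m+1)).mulVec (fun j => z j.succ.succ) i := by
  rw [smat_mulVec_succ (m+1) (not_odd_succ_of_odd hm) z i.succ,
    smat_mulVec_succ' m hm]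

lemma zsol_shift (t : ℕ) (j : Fin (2*t+1)) :
    zsol (2*t+3) j.succ.succ
      = ((Nat.fib (2*t+1) : ℝ) / (Nat.fib (2*t+3) : ℝ)) * zsol (2*t+1) j := by
  have hfib1 : (Nat.fib (2*t+1) : ℝ) ≠ 0 := ne_of_gt (fib_cast_pos (by omega))
  have hfib3 : (Nat.fib (2*t+3) : ℝ) ≠ 0 := ne_of_gt (fib_cast_pos (by omega))
  have hval : ((j.succ.succ : Fin (2*t+3)) : ℕ) = (j : ℕ) + 2 := by
    simp [Fin.val_succ]
  unfold zsol
  rw [hval]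
  rcases eq_or_ne (j : ℕ) (2*t) with h | h
  · rw [if_pos (by omega), if_pos (by omega : (j:ℕ) = 2*t+1-1)]
    field_simp
  · have hlt : (j : ℕ) < 2*t+1 := j.isLt
    rw [if_neg (by omega), if_neg (by omega : ¬ (j:ℕ) = 2*t+1-1)]
    have h1 : 2*t+3-1-((j:ℕ)+2) = 2*t+1-1-(j:ℕ) := by omega
    rw [h1]
    field_simp

lemma key (t : ℕ) : (Smat (2*t+1)).mulVec (zsol (2*t+1)) = 1 ∧
    ∀ z : Fin (2*t+1) → ℝ, (Smat (2*t+1)).mulVec z = 1 → z = zsol (2*t+1) := by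
  induction t with
  | zero =>
    have hz : zsol 1 = fun _ => (1:ℝ) := by
      funext i
      simp [zsol, Nat.fib_one]
    constructor
    · funext i
      simp [Smat, Matrix.mulVec, dotProduct, hz]
    · intro z h
      have h0 := congrFun h 0
      simp [Smat, Matrix.mulVec, dotProduct] at h0
      funext i
      rw [Fin.fin_one_eq_zero i, h0, hz]
  | succ t ih =>
    have hrw : 2*(t+1)+1 = 2*t+3 := by ring
    rw [hrw]
    have hm : Odd (2*t+1) := ⟨t, by ring⟩
    have hf1 : (0:ℝ) < (Nat.fib (2*t+1) : ℝ) := fib_cast_pos (by omega)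
    have hf2 : (0:ℝ) < (Nat.fib (2*t+2) : ℝ) := fib_cast_pos (by omega)
    have hf3 : (0:ℝ) < (Nat.fib (2*t+3) : ℝ) := fib_cast_pos (by omega)
    have hrec : (Nat.fib (2*t+3) : ℝ) = Nat.fib (2*t+2) + Nat.fib (2*t+1) := by
      have h : Nat.fib (2*t+3) = Nat.fib (2*t+1) + Nat.fib (2*t+2) := Nat.fib_add_two
      rw [h]; push_cast; ring
    have hrec2 : (Nat.fib (2*t+2) : ℝ) = Nat.fib (2*t+1) + Nat.fib (2*t) := by
      have h : Nat.fib (2*t+2) = Nat.fib (2*t) + Nat.fib (2*t+1) := Nat.fib_add_two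
      rw [h]; push_cast; ring
    -- values of zsol (2*t+3) at 0 and 1
    have hz0 : zsol (2*t+3) 0 = (Nat.fib (2*t+2) : ℝ) / (Nat.fib (2*t+3) : ℝ) := by
      simp [zsol]
    have hz1 : zsol (2*t+3) (0 : Fin (2*t+2)).succ
        = (Nat.fib (2*t+1) : ℝ) / (Nat.fib (2*t+3) : ℝ) := by
      have : (((0 : Fin (2*t+2)).succ : Fin (2*t+3)) : ℕ) = 1 := rfl
      rw [zsol, this, if_neg (by omega)]
      norm_num
    -- shifted zsol as a scalar multiple
    have hshift : (fun j : Fin (2*t+1) => zsol (2*t+3) j.succ.succ)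
        = ((Nat.fib (2*t+1) : ℝ) / (Nat.fib (2*t+3) : ℝ)) • zsol (2*t+1) := by
      funext j
      rw [zsol_shift t j]
      rfl
    -- sum of shifted entries
    have hsum1 : ∑ j : Fin (2*t+1), zsol (2*t+1) j
        = (Nat.fib (2*t+2) : ℝ) / (Nat.fib (2*t+1) : ℝ) := zsol_sum (2*t+1) (by omega)
    constructor
    · -- existence
      funext i
      induction i using Fin.cases with
      | zero =>
        rw [smat_mulVec_zero3 (2*t) hm]
        have hsplit : ∑ j : Fin (2*t+2), zsol (2*t+3) j.succ
            = ∑ i : Fin (2*t+3), zsol (2*t+3) i - zsol (2*t+3) 0 := by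
          rw [show ∑ i : Fin (2*t+3), zsol (2*t+3) i
              = zsol (2*t+3) 0 + ∑ j : Fin (2*t+2), zsol (2*t+3) j.succ from
            Fin.sum_univ_succ _]
          ring
        rw [hsplit, zsol_sum (2*t+3) (by omega), hz0]
        have hrec3 : (Nat.fib (2*t+4) : ℝ) = Nat.fib (2*t+3) + Nat.fib (2*t+2) := by
          have h : Nat.fib (2*t+4) = Nat.fib (2*t+2) + Nat.fib (2*t+3) := Nat.fib_add_two
          rw [h]; push_cast; ring
        rw [Pi.one_apply, hrec3]
        field_simp
        ring
      | succ i =>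
        induction i using Fin.cases with
        | zero =>
          rw [smat_mulVec_one3 (2*t) hm, hz0, hz1, Pi.one_apply, hrec]
          field_simp
        | succ i =>
          rw [smat_mulVec_two3 (2*t) hm, hshift, Matrix.mulVec_smul, ih.1, hz0]
          simp only [Pi.smul_apply, Pi.one_apply, smul_eq_mul, mul_one]
          rw [hrec]
          field_simp
    · -- uniqueness
      intro z hz
      have hA := congrFun hz 0
      rw [smat_mulVec_zero3 (2*t) hm, Pi.one_apply, Fin.sum_univ_succ] at hA
      have hB := congrFun hz (0 : Fin (2*t+2)).succ
      rw [smat_mulVec_one3 (2*t) hm, Pi.one_apply] at hB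
      set c : ℝ := 1 - z 0 with hc
      set w : Fin (2*t+1) → ℝ := fun j => z j.succ.succ with hw
      have hC : (Smat (2*t+1)).mulVec w = c • (1 : Fin (2*t+1) → ℝ) := by
        funext i
        have := congrFun hz i.succ.succ
        rw [smat_mulVec_two3 (2*t) hm, Pi.one_apply] at this
        simp only [Pi.smul_apply, Pi.one_apply, smul_eq_mul, mul_one]
        rw [hw]; linarith [this]
      have hker : ∀ v : Fin (2*t+1) → ℝ, (Smat (2*t+1)).mulVec v = 0 → v = 0 := by
        intro v hv
        have : (Smat (2*t+1)).mulVec (zsol (2*t+1) + v) = 1 := by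
          rw [Matrix.mulVec_add, ih.1, hv, add_zero]
        have := ih.2 _ this
        have := congrArg (fun x => x - zsol (2*t+1)) this
        simpa using this
      rcases eq_or_ne c 0 with h0 | h0
      · exfalso
        have hw0 : w = 0 := hker w (by rw [hC, h0, zero_smul])
        have hsum0 : ∑ j : Fin (2*t+1), z j.succ.succ = 0 := by
          have : ∀ j : Fin (2*t+1), z j.succ.succ = 0 := fun j => congrFun hw0 j
          simp [this]
        have hz1' : z (0 : Fin (2*t+2)).succ = 1 := by
          rw [hsum0] at hA; linarith
        -- hB : z 0 + z 1 = 1, c = 0 means z 0 = 1, so z 1 = 0 ≠ 1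
        have : z 0 = 1 := by rw [hc] at h0; linarith
        rw [this, hz1'] at hB; linarith
      · have hwc : w = c • zsol (2*t+1) := by
          have h1 : (Smat (2*t+1)).mulVec (c⁻¹ • w) = 1 := by
            rw [Matrix.mulVec_smul, hC, smul_smul, inv_mul_cancel₀ h0, one_smul]
          have h2 := ih.2 _ h1
          calc w = c • (c⁻¹ • w) := by rw [smul_smul, mul_inv_cancel₀ h0, one_smul]
          _ = c • zsol (2*t+1) := by rw [h2]
        -- hA gives z 1 + c * (fib(2t+2)/fib(2t+1)) = 1
        have hsumw : ∑ j : Fin (2*t+1), z j.succ.succ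
            = c * ((Nat.fib (2*t+2) : ℝ) / (Nat.fib (2*t+1) : ℝ)) := by
          have : ∀ j : Fin (2*t+1), z j.succ.succ = c * zsol (2*t+1) j := by
            intro j; have := congrFun hwc j; simpa using this
          rw [Finset.sum_congr rfl (fun j _ => this j), ← Finset.mul_sum, hsum1]
        rw [hsumw] at hA
        -- hB : z 0 + z 1 = 1 so z 1 = c
        have hz1c : z (0 : Fin (2*t+2)).succ = c := by rw [hc]; linarith
        rw [hz1c] at hA
        -- solve: c * (1 + fib(2t+2)/fib(2t+1)) = 1
        have hcval : c = (Nat.fib (2*t+1) : ℝ) / (Nat.fib (2*t+3) : ℝ) := by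
          have hne1 : (Nat.fib (2*t+1) : ℝ) ≠ 0 := ne_of_gt hf1
          have hne3 : (Nat.fib (2*t+3) : ℝ) ≠ 0 := ne_of_gt hf3
          field_simp at hA ⊢
          rw [hrec]
          nlinarith [hA]
        funext i
        induction i using Fin.cases with
        | zero =>
          rw [hz0]
          have : z 0 = 1 - c := by rw [hc]; ring
          rw [this, hcval, hrec]
          field_simp
          ring
        | succ i =>
          induction i using Fin.cases with
          | zero => rw [hz1c, hcval, hz1]
          | succ i =>
            have := congrFun hwc i
            simp only [hw, Pi.smul_apply, smul_eq_mul] at this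
            rw [this, zsol_shift t i, hcval]

/-- For every odd `n > 0`, the system `S_n z = 1` has a unique solution, namely
`z = (F_{n-1}/F_n, …, F_1/F_n, 1/F_n)`; each entry of this solution is strictly
positive, and consequently `F_n · z_i` is a positive integer for each `i`. -/
theorem smat_solution_positive (n : ℕ) (hn : Odd n) (hpos : 0 < n) :
    (∃! z : Fin n → ℝ, (Smat n).mulVec z = 1) ∧
    (Smat n).mulVec (zsol n) = 1 ∧
    (∀ i : Fin n, 0 < zsol n i) ∧
    (∀ i : Fin n, ∃ m : ℕ, 0 < m ∧ (Nat.fib n : ℝ) * zsol n i = (m : ℝ)) := by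
  obtain ⟨t, rfl⟩ : ∃ t, n = 2*t+1 := by
    obtain ⟨t, ht⟩ := hn; exact ⟨t, by omega⟩
  obtain ⟨hex, huniq⟩ := key t
  have hfn : (0:ℝ) < (Nat.fib (2*t+1) : ℝ) := fib_cast_pos (by omega)
  refine ⟨⟨zsol (2*t+1), hex, fun y hy => huniq y hy⟩, hex, ?_, ?_⟩
  · intro i
    unfold zsol
    split
    · positivity
    · next h =>
      have hlt : (i : ℕ) < 2*t+1 := i.isLt
      have : 0 < 2*t+1-1-(i:ℕ) := by omega
      exact div_pos (fib_cast_pos this) hfn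
  · intro i
    have hne : (Nat.fib (2*t+1) : ℝ) ≠ 0 := ne_of_gt hfn
    unfold zsol
    split
    · exact ⟨1, one_pos, by field_simp; norm_num⟩
    · next h =>
      have hlt : (i : ℕ) < 2*t+1 := i.isLt
      refine ⟨Nat.fib (2*t+1-1-(i:ℕ)), Nat.fib_pos.2 (by omega), by field_simp⟩
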